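/- Let P be an n×n row-stochastic matrix with stationary distribution μ (a row vector with μP = μ, μ𝟙 = 1), and let P' be another row-stochastic matrix with stationary distribution μ'. If the spectral radius of P − 𝟙μ is less than 1, then μ'ᵀ − μᵀ = μ'ᵀ(P' − P)(I − P + 𝟙μᵀ)^{-1}, and in particular ‖μ' − μ‖₁ ≤ K‖P' − P‖₁ for a constant K depending only on P and μ. -/

import Mathlib

open Matrix Finset

/-- The induced matrix 1-norm (maximum absolute column sum). -/
noncomputable def matOneNorm {n : ℕ} (M : Matrix (Fin n) (Fin n) ℝ) : ℝ :=
  ⨆ j, ∑ i, |M i j|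

/-- Perturbation identity and bound for stationary distributions of
row-stochastic matrices: if `ρ(P - 𝟙μ) < 1` then
`μ' - μ = μ'(P' - P)(I - P + 𝟙μ)⁻¹`, and
`‖μ' - μ‖₁ ≤ K ‖P' - P‖₁` for a constant `K` depending only on `P` and `μ`. -/
theorem stmt11 {n : ℕ} (P P' : Matrix (Fin n) (Fin n) ℝ) (μ μ' : Fin n → ℝ)
    (hP0 : ∀ i j, 0 ≤ P i j) (hP1 : ∀ i, ∑ j, P i j = 1)
    (hP'0 : ∀ i j, 0 ≤ P' i j) (hP'1 : ∀ i, ∑ j, P' i j = 1)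
    (hμ0 : ∀ i, 0 ≤ μ i) (hμ1 : ∑ i, μ i = 1) (hμ : μ ᵥ* P = μ)
    (hμ'0 : ∀ i, 0 ≤ μ' i) (hμ'1 : ∑ i, μ' i = 1) (hμ' : μ' ᵥ* P' = μ')
    (hρ : ∀ z ∈ spectrum ℂ
        ((P - Matrix.of fun _ j => μ j).map (fun x : ℝ => (x : ℂ))),
      ‖z‖ < 1) :
    μ' - μ =
      (μ' ᵥ* (P' - P)) ᵥ* (1 - P + Matrix.of fun _ j => μ j)⁻¹ ∧
    ∃ K : ℝ, ∀ (Q : Matrix (Fin n) (Fin n) ℝ) (ν : Fin n → ℝ),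
      (∀ i j, 0 ≤ Q i j) → (∀ i, ∑ j, Q i j = 1) →
      (∀ i, 0 ≤ ν i) → (∑ i, ν i = 1) → ν ᵥ* Q = ν →
      ∑ i, |ν i - μ i| ≤ K * matOneNorm (Q - P) := by
  rcases Nat.eq_zero_or_pos n with hn | hn
  · subst hn; simp at hμ1
  have hne : Nonempty (Fin n) := ⟨⟨0, hn⟩⟩
  set A : Matrix (Fin n) (Fin n) ℝ := 1 - P + Matrix.of fun _ j => μ j with hA
  -- invertibility of A
  have hdet : IsUnit A.det := by
    rw [isUnit_iff_ne_zero]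
    intro hd
    have hspec : (1 : ℂ) ∈ spectrum ℂ
        ((P - Matrix.of fun _ j => μ j).map (fun x : ℝ => (x : ℂ))) := by
      rw [spectrum.mem_iff]
      rw [Matrix.isUnit_iff_isUnit_det]
      have heq : algebraMap ℂ (Matrix (Fin n) (Fin n) ℂ) 1 -
          (P - Matrix.of fun _ j => μ j).map (fun x : ℝ => (x : ℂ)) =
          A.map (algebraMap ℝ ℂ) := by
        ext i j
        simp [A, Matrix.one_apply, Matrix.algebraMap_matrix_apply, apply_ite Complex.ofReal]
        split <;> ring
      rw [heq, show (A.map ⇑(algebraMap ℝ ℂ)).det = ((A.det : ℝ) : ℂ) from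
        (RingHom.map_det (algebraMap ℝ ℂ) A).symm, hd]
      simp
    have := hρ 1 hspec
    simp at this
  -- key identity for any stationary pair (Q, ν)
  have hof : ∀ (ν : Fin n → ℝ), (∑ i, ν i = 1) →
      ν ᵥ* (Matrix.of fun _ j => μ j) = μ := by
    intro ν hν1
    funext j
    simp [vecMul, dotProduct, ← Finset.sum_mul, hν1]
  have key : ∀ (Q : Matrix (Fin n) (Fin n) ℝ) (ν : Fin n → ℝ),
      (∑ i, ν i = 1) → ν ᵥ* Q = ν → ν - μ = (ν ᵥ* (Q - P)) ᵥ* A⁻¹ := by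
    intro Q ν hν1 hνQ
    have h1 : (ν - μ) ᵥ* A = ν ᵥ* (Q - P) := by
      simp only [hA, Matrix.sub_vecMul, Matrix.vecMul_add, Matrix.vecMul_sub,
        Matrix.vecMul_one, hof ν hν1, hof μ hμ1, hμ, hνQ]
      abel
    calc ν - μ = ((ν - μ) ᵥ* A) ᵥ* A⁻¹ := by
          rw [Matrix.vecMul_vecMul, Matrix.mul_nonsing_inv A hdet, Matrix.vecMul_one]
      _ = (ν ᵥ* (Q - P)) ᵥ* A⁻¹ := by rw [h1]
  constructor
  · exact key P' μ' hμ'1 hμ'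
  · set C : ℝ := ⨆ i, ∑ j, |A⁻¹ i j| with hC
    have hCb : ∀ i, ∑ j, |A⁻¹ i j| ≤ C :=
      fun i => le_ciSup (f := fun i => ∑ j, |A⁻¹ i j|)
        (Set.Finite.bddAbove (Set.finite_range _)) i
    have hC0 : 0 ≤ C := le_trans (Finset.sum_nonneg fun j _ => abs_nonneg _) (hCb (Classical.arbitrary _))
    refine ⟨n * C, ?_⟩
    intro Q ν hQ0 hQ1 hν0 hν1 hνQ
    have hid := key Q ν hν1 hνQ
    set B := Q - P with hB
    set w := ν ᵥ* B with hw
    have hcol : ∀ j, ∑ i, |B i j| ≤ matOneNorm B :=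
      fun j => le_ciSup (f := fun j => ∑ i, |B i j|)
        (Set.Finite.bddAbove (Set.finite_range _)) j
    have hM0 : 0 ≤ matOneNorm B :=
      le_trans (Finset.sum_nonneg fun j _ => abs_nonneg _) (hcol (Classical.arbitrary _))
    have hwb : ∀ j, |w j| ≤ matOneNorm B := by
      intro j
      calc |w j| = |∑ i, ν i * B i j| := by simp [hw, vecMul, dotProduct]
        _ ≤ ∑ i, |ν i * B i j| := Finset.abs_sum_le_sum_abs _ _
        _ ≤ ∑ i, |B i j| := by
            apply Finset.sum_le_sum
            intro i _
            rw [abs_mul, abs_of_nonneg (hν0 i)]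
            have hνi1 : ν i ≤ 1 := by
              rw [← hν1]
              exact Finset.single_le_sum (fun k _ => hν0 k) (Finset.mem_univ i)
            nlinarith [abs_nonneg (B i j)]
        _ ≤ matOneNorm B := hcol j
    calc ∑ i, |ν i - μ i| = ∑ j, |∑ i, w i * A⁻¹ i j| := by
          refine Finset.sum_congr rfl fun j _ => ?_
          rw [show ν j - μ j = (w ᵥ* A⁻¹) j from congrFun hid j]
          simp [vecMul, dotProduct]
      _ ≤ ∑ j, ∑ i, |w i * A⁻¹ i j| :=
          Finset.sum_le_sum fun j _ => Finset.abs_sum_le_sum_abs _ _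
      _ = ∑ i, |w i| * ∑ j, |A⁻¹ i j| := by
          rw [Finset.sum_comm]
          exact Finset.sum_congr rfl fun i _ => by rw [Finset.mul_sum]; simp [abs_mul]
      _ ≤ ∑ i, matOneNorm B * C := by
          apply Finset.sum_le_sum
          intro i _
          exact mul_le_mul (hwb i) (hCb i) (Finset.sum_nonneg fun j _ => abs_nonneg _) hM0
      _ = n * C * matOneNorm B := by
          rw [Finset.sum_const]; simp [Finset.card_univ]; ring
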